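/- Let A, D, I be events on a probability space with 0 < P(A) < 1. Suppose D and I are conditionally independent given A and conditionally independent given the complement Aᶜ (i.e., P(I ∩ D | A) = P(I | A)·P(D | A) and P(I ∩ D | Aᶜ) = P(I | Aᶜ)·P(D | Aᶜ)), that P(D | A) = 1 and P(D | Aᶜ) < 1, and that P(I | A) > P(I | Aᶜ). Then P(I | D) > P(I); in particular, D and I are not independent. -/

import Mathlib

open MeasureTheory ProbabilityTheory

set_option maxHeartbeats 1000000 in
/-- Example 2, max-gap testing violates MITI: if testing and infectiousness
are conditionally independent given `A` and given `Aᶜ`, everyone in `A` is tested,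
testing on `Aᶜ` is not certain, and infection is more likely on `A`, then
`P(I | D) > P(I)`; in particular `D` and `I` are not independent. -/
theorem stmt8
    {Ω : Type*} [MeasurableSpace Ω] (μ : Measure Ω) [IsProbabilityMeasure μ]
    (A D I : Set Ω)
    (hA : MeasurableSet A) (hD : MeasurableSet D) (hI : MeasurableSet I)
    (hApos : 0 < μ A) (hAlt : μ A < 1)
    (hciA : μ[|A] (I ∩ D) = μ[|A] I * μ[|A] D)
    (hciAc : μ[|Aᶜ] (I ∩ D) = μ[|Aᶜ] I * μ[|Aᶜ] D)
    (hDA : μ[|A] D = 1)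
    (hDAc : μ[|Aᶜ] D < 1)
    (hIA : μ[|Aᶜ] I < μ[|A] I) :
    μ I < μ[|D] I ∧ μ (I ∩ D) ≠ μ I * μ D := by
  have hAc : MeasurableSet Aᶜ := hA.compl
  have hAne : μ A ≠ 0 := hApos.ne'
  have hAcpos : 0 < μ Aᶜ := by
    rw [prob_compl_eq_one_sub hA]; exact tsub_pos_of_lt hAlt
  have hAcne : μ Aᶜ ≠ 0 := hAcpos.ne'
  -- real abbreviations
  set a : ℝ := (μ A).toReal with ha_def
  set b : ℝ := (μ Aᶜ).toReal with hb_def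
  set x1 : ℝ := (μ (A ∩ I)).toReal with hx1_def
  set x2 : ℝ := (μ (Aᶜ ∩ I)).toReal with hx2_def
  set d1 : ℝ := (μ (A ∩ D)).toReal with hd1_def
  set d2 : ℝ := (μ (Aᶜ ∩ D)).toReal with hd2_def
  set y1 : ℝ := (μ (A ∩ (I ∩ D))).toReal with hy1_def
  set y2 : ℝ := (μ (Aᶜ ∩ (I ∩ D))).toReal with hy2_def
  have ha : 0 < a := ENNReal.toReal_pos hAne (measure_ne_top μ A)
  have hb : 0 < b := ENNReal.toReal_pos hAcne (measure_ne_top μ Aᶜ)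
  have hab : a + b = 1 := by
    rw [ha_def, hb_def, ← ENNReal.toReal_add (measure_ne_top μ A) (measure_ne_top μ Aᶜ),
      measure_add_measure_compl hA]
    simp
  -- totals
  have htot : ∀ s : Set Ω, (μ s).toReal = (μ (A ∩ s)).toReal + (μ (Aᶜ ∩ s)).toReal := by
    intro s
    have h := measure_inter_add_diff (μ := μ) s hA
    rw [Set.inter_comm s A, Set.diff_eq_compl_inter] at h
    rw [← h, ENNReal.toReal_add (measure_ne_top _ _) (measure_ne_top _ _)]
  -- convert cond hypotheses to real
  have HciA : y1 / a = x1 / a * (d1 / a) := by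
    have := congrArg ENNReal.toReal hciA
    rw [cond_apply hA, cond_apply hA, cond_apply hA, ENNReal.toReal_mul, ENNReal.toReal_mul,
      ENNReal.toReal_mul, ENNReal.toReal_inv] at this
    simpa [div_eq_inv_mul, mul_assoc, mul_comm, mul_left_comm] using this
  have HciAc : y2 / b = x2 / b * (d2 / b) := by
    have := congrArg ENNReal.toReal hciAc
    rw [cond_apply hAc, cond_apply hAc, cond_apply hAc, ENNReal.toReal_mul, ENNReal.toReal_mul,
      ENNReal.toReal_mul, ENNReal.toReal_inv] at this
    simpa [div_eq_inv_mul, mul_assoc, mul_comm, mul_left_comm] using this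
  have HDA : d1 = a := by
    have := congrArg ENNReal.toReal hDA
    rw [cond_apply hA, ENNReal.toReal_mul, ENNReal.toReal_inv] at this
    simp only [ENNReal.toReal_one] at this
    field_simp at this
    exact (div_eq_one_iff_eq ha.ne').mp this
  have HDAc : d2 < b := by
    have h := (ENNReal.toReal_lt_toReal
      (ENNReal.mul_ne_top (ENNReal.inv_ne_top.mpr hAcne) (measure_ne_top _ _))
      (by simp : (1 : ENNReal) ≠ ⊤)).mpr (by rwa [cond_apply hAc] at hDAc)
    rw [ENNReal.toReal_mul, ENNReal.toReal_inv, ENNReal.toReal_one] at h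
    have := (div_lt_one hb).mp (by rwa [div_eq_inv_mul])
    exact this
  have HIA : x2 / b < x1 / a := by
    have h := (ENNReal.toReal_lt_toReal
      (ENNReal.mul_ne_top (ENNReal.inv_ne_top.mpr hAcne) (measure_ne_top _ _))
      (ENNReal.mul_ne_top (ENNReal.inv_ne_top.mpr hAne) (measure_ne_top _ _))).mpr
      (by rwa [cond_apply hAc, cond_apply hA] at hIA)
    rw [ENNReal.toReal_mul, ENNReal.toReal_mul, ENNReal.toReal_inv, ENNReal.toReal_inv] at h
    simpa [div_eq_inv_mul] using h
  -- derived facts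
  have hy1 : y1 = x1 := by
    rw [HDA, div_mul_div_comm,
      div_eq_div_iff ha.ne' (mul_ne_zero ha.ne' ha.ne')] at HciA
    have hc : (y1 - x1) * (a * a) = 0 := by linear_combination HciA
    rcases mul_eq_zero.mp hc with h | h
    · linarith
    · exact absurd h (mul_ne_zero ha.ne' ha.ne')
  have hy2b : y2 * b = x2 * d2 := by
    rw [div_mul_div_comm,
      div_eq_div_iff hb.ne' (mul_ne_zero hb.ne' hb.ne')] at HciAc
    have hc : (y2 * b - x2 * d2) * b = 0 := by linear_combination HciAc
    rcases mul_eq_zero.mp hc with h | h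
    · linarith
    · exact absurd h hb.ne'
  have hx2a : x2 * a < x1 * b := by
    rw [div_lt_div_iff₀ hb ha] at HIA
    linarith
  -- the key strict inequality over the reals
  have key : b * ((x1 + y2) - (x1 + x2) * (a + d2)) = (b - d2) * (x1 * b - x2 * a) := by
    linear_combination hy2b - (b * x1 + x2 * d2) * hab
  have hprod : 0 < (b - d2) * (x1 * b - x2 * a) :=
    mul_pos (by linarith) (by linarith)
  have hΔ : (x1 + x2) * (a + d2) < x1 + y2 := by nlinarith [key, hprod, hb]
  -- totals in real form
  have hI_tot : (μ I).toReal = x1 + x2 := htot I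
  have hD_tot : (μ D).toReal = a + d2 := by rw [htot D]; rw [← hd1_def, ← hd2_def, HDA]
  have hID_tot : (μ (I ∩ D)).toReal = x1 + y2 := by
    rw [htot (I ∩ D), ← hy1_def, ← hy2_def, hy1]
  -- second goal
  have hineq : (μ I).toReal * (μ D).toReal < (μ (I ∩ D)).toReal := by
    rw [hI_tot, hD_tot, hID_tot]; exact hΔ
  have goal2 : μ (I ∩ D) ≠ μ I * μ D := by
    intro h
    have := congrArg ENNReal.toReal h
    rw [ENNReal.toReal_mul] at this
    exact hineq.ne' this
  refine ⟨?_, goal2⟩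
  -- first goal
  have hd2nn : 0 ≤ d2 := ENNReal.toReal_nonneg
  have hDpos : 0 < (μ D).toReal := by rw [hD_tot]; linarith
  have hDne : μ D ≠ 0 := by
    intro h; rw [h] at hDpos; simp at hDpos
  have hcond : (μ[|D] I).toReal = (μ (I ∩ D)).toReal / (μ D).toReal := by
    rw [cond_apply hD, ENNReal.toReal_mul, ENNReal.toReal_inv, Set.inter_comm D I]
    ring
  have hlt : (μ I).toReal < (μ[|D] I).toReal := by
    rw [hcond, lt_div_iff₀ hDpos]
    exact hineq
  have hcne : μ[|D] I ≠ ⊤ := by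
    rw [cond_apply hD]
    exact ENNReal.mul_ne_top (ENNReal.inv_ne_top.mpr hDne) (measure_ne_top _ _)
  exact (ENNReal.toReal_lt_toReal (measure_ne_top μ I) hcne).mp hlt
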